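/- Let K be a field, let R and R' be finite-dimensional commutative local associative unital K-algebras with maximal ideals m and m' and residue field K, and let φ: R → R' be a surjective K-algebra homomorphism. Suppose U is a hyperplane in m, U' is a hyperplane in m', φ(U) = U', and (m')^3 ⊆ U'. Then m^3 ⊆ U. (This gives the 'only if' direction: if the H-pair (R, U) admits a homomorphism of H-pairs onto (A_k, U_k), whose maximal ideal has vanishing cube, then m^3 ⊆ U.) -/
import Mathlib

open IsLocalRing Submodule Module

theorem stmt18 (K R R' : Type*) [Field K]
    [CommRing R] [Algebra K R] [IsLocalRing R] [FiniteDimensional K R]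
    [CommRing R'] [Algebra K R'] [IsLocalRing R'] [FiniteDimensional K R']
    (hres : Function.Bijective (algebraMap K (IsLocalRing.ResidueField R)))
    (hres' : Function.Bijective (algebraMap K (IsLocalRing.ResidueField R')))
    (φ : R →ₐ[K] R') (hsur : Function.Surjective φ)
    (U : Submodule K R) (U' : Submodule K R')
    (hUm : U ≤ (IsLocalRing.maximalIdeal R).restrictScalars K)
    (hhyp : Module.finrank K U + 1 =
      Module.finrank K ↥((IsLocalRing.maximalIdeal R).restrictScalars K))
    (hUm' : U' ≤ (IsLocalRing.maximalIdeal R').restrictScalars K)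
    (hhyp' : Module.finrank K U' + 1 =
      Module.finrank K ↥((IsLocalRing.maximalIdeal R').restrictScalars K))
    (hmap : Submodule.map φ.toLinearMap U = U')
    (hcube' : (IsLocalRing.maximalIdeal R' ^ 3).restrictScalars K ≤ U') :
    (IsLocalRing.maximalIdeal R ^ 3).restrictScalars K ≤ U := by
  set f := φ.toLinearMap with hf
  set M := (maximalIdeal R).restrictScalars K with hM
  set M' := (maximalIdeal R').restrictScalars K with hM'
  have hloc : IsLocalHom φ.toRingHom := IsLocalHom.of_surjective _ hsur
  have hφm : ∀ x ∈ maximalIdeal R, φ x ∈ maximalIdeal R' := by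
    intro x hx hcon
    exact hx (hloc.map_nonunit x hcon)
  -- kernel is contained in m
  have hkerM : LinearMap.ker f ≤ M := by
    intro x hx
    simp only [LinearMap.mem_ker] at hx
    have hx' : (φ : R →+* R') x = 0 := hx
    by_contra hxm
    have hu : IsUnit x := by
      by_contra h
      exact hxm h
    have : IsUnit (φ x) := hu.map φ.toRingHom
    rw [show φ x = (0 : R') from hx] at this
    exact not_isUnit_zero this
  -- φ maps m onto m'
  have hmapM : Submodule.map f M = M' := by
    apply le_antisymm
    · rintro _ ⟨x, hx, rfl⟩
      exact hφm x hx
    · intro y hy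
      obtain ⟨x, rfl⟩ := hsur y
      obtain ⟨c, hc⟩ := hres.2 (residue R x)
      have hx2 : x - algebraMap K R c ∈ maximalIdeal R := by
        rw [← residue_eq_zero_iff, map_sub, ← hc]
        have : residue R (algebraMap K R c) = algebraMap K (ResidueField R) c := rfl
        rw [this, sub_self]
      have h3 : φ (x - algebraMap K R c) ∈ maximalIdeal R' := hφm _ hx2
      have h4 : algebraMap K R' c ∈ maximalIdeal R' := by
        have : algebraMap K R' c = φ x - φ (x - algebraMap K R c) := by
          rw [map_sub, AlgHom.commutes]; ring
        rw [this]
        exact sub_mem hy h3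
      have hc0 : c = 0 := by
        by_contra hc0
        exact (maximalIdeal R').eq_top_iff_one.not.mp
          (Ideal.IsMaximal.ne_top inferInstance)
          ((maximalIdeal R').eq_top_of_isUnit_mem h4
            ((isUnit_map_iff (algebraMap K R') c).mpr (isUnit_iff_ne_zero.mpr hc0)) ▸
            Submodule.mem_top)
      have hxm : x ∈ maximalIdeal R := by
        rw [← residue_eq_zero_iff, ← hc, hc0, map_zero]
      exact ⟨x, hxm, rfl⟩
  -- dimension counting: ker f ≤ U
  have hkerU : LinearMap.ker f ≤ U := by
    have e1 := LinearMap.finrank_range_add_finrank_ker (f.domRestrict M)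
    have e2 := LinearMap.finrank_range_add_finrank_ker (f.domRestrict U)
    rw [LinearMap.ker_domRestrict, LinearMap.range_domRestrict] at e1 e2
    rw [hmapM] at e1
    rw [show Submodule.map f U = Submodule.map f U from rfl] at e2
    -- identify kernels
    have eM : finrank K ((LinearMap.ker f).comap M.subtype) = finrank K (LinearMap.ker f) :=
      (Submodule.comapSubtypeEquivOfLe hkerM).finrank_eq
    have hUeq : Submodule.map f U = U' := hmap
    rw [hUeq] at e2
    have eU : finrank K ((LinearMap.ker f).comap U.subtype)
        = finrank K (LinearMap.ker f ⊓ U : Submodule K R) := by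
      have : (LinearMap.ker f).comap U.subtype = (LinearMap.ker f ⊓ U).comap U.subtype := by
        ext x; simp [Submodule.mem_comap, x.2]
      rw [this]
      exact (Submodule.comapSubtypeEquivOfLe inf_le_right).finrank_eq
    rw [eM] at e1
    rw [eU] at e2
    have hrk : finrank K (LinearMap.ker f ⊓ U : Submodule K R)
        = finrank K (LinearMap.ker f) := by omega
    have := Submodule.eq_of_le_of_finrank_eq
      (inf_le_left : LinearMap.ker f ⊓ U ≤ LinearMap.ker f) hrk
    rw [← this]
    exact inf_le_right
  -- conclusion
  intro x hx
  have hx3 : φ x ∈ maximalIdeal R' ^ 3 := by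
    have hmapI : Ideal.map φ.toRingHom (maximalIdeal R ^ 3)
        = Ideal.map φ.toRingHom (maximalIdeal R) ^ 3 := Ideal.map_pow _ _ _
    have hmm : Ideal.map φ.toRingHom (maximalIdeal R) ≤ maximalIdeal R' := by
      rw [Ideal.map_le_iff_le_comap]
      intro y hy
      exact hφm y hy
    have : φ x ∈ Ideal.map φ.toRingHom (maximalIdeal R ^ 3) :=
      Ideal.mem_map_of_mem _ hx
    rw [hmapI] at this
    exact Ideal.pow_right_mono hmm 3 this
  have : φ x ∈ U' := hcube' hx3
  rw [← hmap] at this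
  obtain ⟨u, hu, huv⟩ := this
  have : x - u ∈ LinearMap.ker f := by
    rw [LinearMap.mem_ker, map_sub, huv, sub_eq_zero]
    rfl
  have hxu : x - u ∈ U := hkerU this
  have := U.add_mem hxu hu
  simpa using this
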